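/- Let ℓ : V_{k,q} → {1,…,k} be a Sperner-admissible labeling (k ≥ 2, q ≥ 2), and for each i let C_i = { b ∈ V_{k,q-1} : ℓ(v) = i for every v ∈ e(b) }. Then: (1) every b ∈ C_i satisfies b_i > 0, so the map φ_i(b) = b − e_i sends C_i into V_{k,q-2}; (2) each φ_i is injective on C_i; and (3) the images φ_i[C_i] for i = 1, …, k are pairwise disjoint subsets of V_{k,q-2}. -/

import Mathlib

/-- Let `ℓ : V_{k,q} → {1,…,k}` be Sperner-admissible (`k ≥ 2`, `q ≥ 2`)
and let `C_i` be the set of `b ∈ V_{k,q-1}` whose cell `e(b)` is monochromatic in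
color `i`. Then: (1) every `b ∈ C_i` has `b_i > 0`, so `φ_i(b) = b - e_i` maps `C_i`
into `V_{k,q-2}`; (2) each `φ_i` is injective on `C_i`; (3) the images `φ_i[C_i]`
are pairwise disjoint. -/
theorem monochromatic_injection_into_smaller_lattice (k q : ℕ) (hk : 2 ≤ k) (hq : 2 ≤ q)
    (ℓ : (Fin k → ℕ) → Fin k)
    (hℓ : ∀ a : Fin k → ℕ, (∑ i, a i) = q → 0 < a (ℓ a))
    (C : Fin k → Set (Fin k → ℕ))
    (hC : ∀ i : Fin k, C i = {b : Fin k → ℕ | (∑ t, b t) = q - 1 ∧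
      ∀ j : Fin k, ℓ (fun t => b t + if t = j then 1 else 0) = i})
    (φ : Fin k → (Fin k → ℕ) → (Fin k → ℕ))
    (hφ : ∀ (i : Fin k) (b : Fin k → ℕ), φ i b = fun t => b t - if t = i then 1 else 0) :
    (∀ i : Fin k, ∀ b ∈ C i, 0 < b i ∧ (∑ t, φ i b t) = q - 2) ∧
    (∀ i : Fin k, Set.InjOn (φ i) (C i)) ∧
    (∀ i j : Fin k, i ≠ j → ∀ b ∈ C i, ∀ b' ∈ C j, φ i b ≠ φ j b') := by
  have key : ∀ i : Fin k, ∀ b ∈ C i, 0 < b i ∧ (∑ t, b t) = q - 1 ∧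
      ∀ j : Fin k, ℓ (fun t => b t + if t = j then 1 else 0) = i := by
    intro i b hb
    rw [hC i] at hb
    obtain ⟨hsum, hlab⟩ := hb
    refine ⟨?_, hsum, hlab⟩
    obtain ⟨j, hj⟩ : ∃ j : Fin k, j ≠ i :=
      Fintype.exists_ne_of_one_lt_card (by simp; omega) i
    have hv : (∑ t, (fun t => b t + if t = j then 1 else 0) t) = q := by
      simp only [Finset.sum_add_distrib, hsum, Finset.sum_ite_eq', Finset.mem_univ,
        if_true]
      omega
    have hpos := hℓ _ hv
    rw [hlab j] at hpos
    simp only [if_neg (Ne.symm hj)] at hpos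
    simpa using hpos
  refine ⟨?_, ?_, ?_⟩
  · intro i b hb
    obtain ⟨hbi, hsum, _⟩ := key i b hb
    refine ⟨hbi, ?_⟩
    rw [hφ]
    have : (∑ t, (b t - if t = i then 1 else 0)) =
        (∑ t, b t) - (∑ t, if t = i then 1 else 0) := by
      rw [eq_tsub_iff_add_eq_of_le, ← Finset.sum_add_distrib]
      · apply Finset.sum_congr rfl
        intro t _
        by_cases h : t = i <;> simp [h] <;> omega
      · apply Finset.sum_le_sum
        intro t _
        by_cases h : t = i <;> simp [h] <;> omega
    simp only [this, Finset.sum_ite_eq', Finset.mem_univ, if_true, hsum]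
    omega
  · intro i b hb b' hb' heq
    obtain ⟨hbi, _, _⟩ := key i b hb
    obtain ⟨hbi', _, _⟩ := key i b' hb'
    rw [hφ, hφ] at heq
    funext t
    have h := congrFun heq t
    by_cases ht : t = i
    · rw [ht] at h ⊢; simp only [if_pos rfl, if_true] at h; omega
    · simpa [ht] using h
  · intro i j hij b hb b' hb' heq
    obtain ⟨hbi, hsum, hlab⟩ := key i b hb
    obtain ⟨hbj', hsum', hlab'⟩ := key j b' hb'
    rw [hφ, hφ] at heq
    have hfun : (fun t => b' t + if t = i then 1 else 0) =
        (fun t => b t + if t = j then 1 else 0) := by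
      funext t
      have h := congrFun heq t
      by_cases hti : t = i
      · rw [hti] at h ⊢
        simp only [if_pos rfl, if_true, if_neg hij] at h ⊢
        omega
      · by_cases htj : t = j
        · rw [htj] at h ⊢
          simp only [if_neg (htj ▸ hti : (j:Fin k) ≠ i), if_pos rfl, if_true,
            if_neg (Ne.symm hij)] at h ⊢
          omega
        · simp only [if_neg hti, if_neg htj] at h ⊢
          omega
    have h1 := hlab' i
    rw [hfun, hlab j] at h1
    exact hij h1
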